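/- arXiv:1607.00278 — 3 statements merged into one kernel-verified Lean document; each statement's English description precedes it below -/
import Mathlib

section
/- Let Z be a finite set of points in ℝ² and let C ⊆ ℝ² be a connected set such that for all z, z' ∈ Z the closed segment [z, z'] is disjoint from C. If some point of C lies outside the convex hull of Z, then C is disjoint from the convex hull of Z. -/
noncomputable section

/-- The plane ℝ². -/
abbrev Plane : Type := EuclideanSpace ℝ (Fin 2)

/-- A point set is in general position if no three of its points are collinear. -/
def InGenPos (P : Set Plane) : Prop :=
  ∀ p ∈ P, ∀ q ∈ P, ∀ r ∈ P, p ≠ q → p ≠ r → q ≠ r →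
    ¬ Collinear ℝ ({p, q, r} : Set Plane)

/-- The union of the closed segments corresponding to the edges of `G`
in the straight-line drawing given by `f`. -/
def edgeUnion {V : Type} (G : SimpleGraph V) (f : V → Plane) : Set Plane :=
  ⋃ (u : V) (v : V) (_ : G.Adj u v), segment ℝ (f u) (f v)

/-- The unbounded connected component of the complement of the drawing. -/
def outsideRegion {V : Type} (G : SimpleGraph V) (f : V → Plane) : Set Plane :=
  {p | p ∈ (edgeUnion G f)ᶜ ∧
       ¬ Bornology.IsBounded (connectedComponentIn (edgeUnion G f)ᶜ p)}

/-- `(f, C)` is a single-obstacle representation of `G`. -/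
def IsObstacleRep {V : Type} (G : SimpleGraph V) (f : V → Plane) (C : Set Plane) : Prop :=
  Function.Injective f ∧ InGenPos (Set.range f) ∧
  IsOpen C ∧ IsConnected C ∧ Disjoint C (Set.range f) ∧
  ∀ u v : V, u ≠ v → (G.Adj u v ↔ Disjoint (segment ℝ (f u) (f v)) C)

/-- An outside-obstacle representation: the obstacle lies in the unbounded component. -/
def IsOutsideObstacleRep {V : Type} (G : SimpleGraph V) (f : V → Plane) (C : Set Plane) : Prop :=
  IsObstacleRep G f C ∧ C ⊆ outsideRegion G f

/-- An inside-obstacle representation: the obstacle avoids the unbounded component. -/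
def IsInsideObstacleRep {V : Type} (G : SimpleGraph V) (f : V → Plane) (C : Set Plane) : Prop :=
  IsObstacleRep G f C ∧ Disjoint C (outsideRegion G f)

/-- An exposed outside-obstacle representation: every vertex lies on the boundary of
the unbounded component. -/
def IsExposedOutsideObstacleRep {V : Type} (G : SimpleGraph V) (f : V → Plane)
    (C : Set Plane) : Prop :=
  IsOutsideObstacleRep G f C ∧ ∀ v : V, f v ∈ closure (outsideRegion G f)

/-- `p` is an extreme point ("on the convex hull") of the point set `P`. -/
def IsExtremePt (p : Plane) (P : Set Plane) : Prop :=
  p ∉ convexHull ℝ (P \ {p})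

/-- `S` has at least `n` connected components. -/
def AtLeastNComponents (S : Set Plane) (n : ℕ) : Prop :=
  ∃ p : Fin n → Plane, (∀ i, p i ∈ S) ∧
    ∀ i j : Fin n, i ≠ j →
      connectedComponentIn S (p i) ≠ connectedComponentIn S (p j)

/-- `S` has exactly `n` connected components. -/
def ExactlyNComponents (S : Set Plane) (n : ℕ) : Prop :=
  ∃ p : Fin n → Plane, (∀ i, p i ∈ S) ∧
    (∀ i j : Fin n, i ≠ j →
      connectedComponentIn S (p i) ≠ connectedComponentIn S (p j)) ∧
    ∀ q ∈ S, ∃ i : Fin n, connectedComponentIn S q = connectedComponentIn S (p i)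

/-- The convex hulls of `A` and `B` are at least `t`-crossing. -/
def AtLeastCrossing (A B : Set Plane) (t : ℕ) : Prop :=
  ((convexHull ℝ A) ∩ (convexHull ℝ B)).Nonempty ∧
    AtLeastNComponents ((convexHull ℝ A) \ (convexHull ℝ B)) (t + 1)

/-- The convex hulls of `A` and `B` are exactly `t`-crossing. -/
def ExactlyCrossing (A B : Set Plane) (t : ℕ) : Prop :=
  ((convexHull ℝ A) ∩ (convexHull ℝ B)).Nonempty ∧
    ExactlyNComponents ((convexHull ℝ A) \ (convexHull ℝ B)) (t + 1)


lemma collinear_hull_subset_segment {s : Set Plane} (hfin : s.Finite) (hne : s.Nonempty)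
    (hcol : Collinear ℝ s) : ∃ a ∈ s, ∃ b ∈ s, convexHull ℝ s ⊆ segment ℝ a b := by
  obtain ⟨p₀, hp₀⟩ := hne
  obtain ⟨v, hv⟩ := (collinear_iff_of_mem hp₀).1 hcol
  by_cases hv0 : v = 0
  · refine ⟨p₀, hp₀, p₀, hp₀, convexHull_min ?_ (convex_segment _ _)⟩
    intro p hp
    obtain ⟨r, hr⟩ := hv p hp
    simp [hr, hv0, segment_same]
  · set L : ℝ →ᵃ[ℝ] Plane := AffineMap.lineMap p₀ (v + p₀) with hLdef
    have hL : ∀ r : ℝ, L r = r • v + p₀ := by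
      intro r
      simp [hLdef, AffineMap.lineMap_apply, vsub_eq_sub, vadd_eq_add, add_sub_cancel_right]
    have hLinj : Function.Injective L := by
      intro r r' h
      rw [hL, hL] at h
      have h2 : r • v = r' • v := add_right_cancel h
      have : (r - r') • v = 0 := by rw [sub_smul, h2, sub_self]
      rcases smul_eq_zero.1 this with h' | h'
      · exact sub_eq_zero.1 h'
      · exact absurd h' hv0
    have hRfin : (L ⁻¹' s).Finite := hfin.preimage (hLinj.injOn)
    have hRne : (L ⁻¹' s).Nonempty := ⟨0, by simpa [hL] using hp₀⟩
    obtain ⟨a, ha, hamin⟩ := Set.exists_min_image _ id hRfin hRne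
    obtain ⟨b, hb, hbmax⟩ := Set.exists_max_image _ id hRfin hRne
    refine ⟨L a, ha, L b, hb, convexHull_min ?_ (convex_segment _ _)⟩
    intro p hp
    obtain ⟨r, hr⟩ := hv p hp
    have hpr : p = L r := by rw [hL]; exact hr
    have hrR : r ∈ L ⁻¹' s := by rw [Set.mem_preimage, ← hpr]; exact hp
    have hab : a ≤ b := le_trans (hamin b hb) (le_refl b)
    rw [hpr, ← image_segment ℝ L a b, segment_eq_Icc hab]
    exact ⟨r, ⟨hamin r hrR, hbmax r hrR⟩, rfl⟩

lemma collinear_level {f : Plane →L[ℝ] ℝ} (hf : ∃ x y : Plane, f x ≠ f y) (c : ℝ) :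
    Collinear ℝ {z : Plane | f z = c} := by
  rw [collinear_iff_finrank_le_one]
  have hle : vectorSpan ℝ {z : Plane | f z = c} ≤ LinearMap.ker (f : Plane →ₗ[ℝ] ℝ) := by
    rw [vectorSpan_def, Submodule.span_le]
    rintro w hw
    rw [Set.mem_vsub] at hw
    obtain ⟨x, hx, y, hy, rfl⟩ := hw
    simp only [Set.mem_setOf_eq] at hx hy
    simp [LinearMap.mem_ker, vsub_eq_sub, map_sub, hx, hy]
  have h1 : Module.finrank ℝ (LinearMap.ker (f : Plane →ₗ[ℝ] ℝ)) = 1 := by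
    have h2 := LinearMap.finrank_range_add_finrank_ker (f : Plane →ₗ[ℝ] ℝ)
    have hr : LinearMap.range (f : Plane →ₗ[ℝ] ℝ) = ⊤ := by
      obtain ⟨x, y, hxy⟩ := hf
      have hx : f (x - y) ≠ 0 := by rw [map_sub]; exact sub_ne_zero.2 hxy
      rw [LinearMap.range_eq_top]
      intro z
      refine ⟨(z / f (x - y)) • (x - y), ?_⟩
      simp only [ContinuousLinearMap.coe_coe, map_smul, smul_eq_mul]
      rw [map_sub] at hx ⊢
      field_simp
    rw [hr, finrank_top] at h2
    have h3 : Module.finrank ℝ Plane = 2 := finrank_euclideanSpace_fin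
    have h4 : Module.finrank ℝ ℝ = 1 := Module.finrank_self ℝ
    omega
  calc Module.finrank ℝ (vectorSpan ℝ {z : Plane | f z = c})
      ≤ Module.finrank ℝ (LinearMap.ker (f : Plane →ₗ[ℝ] ℝ)) := Submodule.finrank_mono hle
    _ = 1 := h1

lemma frontier_convexHull_subset_segments {Z : Set Plane} (hZ : Z.Finite)
    (hint : (interior (convexHull ℝ Z)).Nonempty) :
    ∀ x ∈ frontier (convexHull ℝ Z), ∃ a ∈ Z, ∃ b ∈ Z, x ∈ segment ℝ a b := by
  classical
  intro x hx
  have hHclosed : IsClosed (convexHull ℝ Z) := hZ.isClosed_convexHull ℝ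
  obtain ⟨hxcl, hxint⟩ := hx
  have hxH : x ∈ convexHull ℝ Z := by rwa [hHclosed.closure_eq] at hxcl
  obtain ⟨f, hf⟩ := geometric_hahn_banach_open_point
    ((convex_convexHull ℝ Z).interior) isOpen_interior hxint
  obtain ⟨y, hy⟩ := hint
  have hylt : f y < f x := hf y hy
  have hle : ∀ a ∈ convexHull ℝ Z, f a ≤ f x := by
    intro a ha
    by_contra h
    push_neg at h
    have hd : 0 < f a - f y := by linarith
    set t : ℝ := min 1 ((f a - f x) / (f a - f y)) with htdef
    have ht0 : 0 < t := lt_min one_pos (div_pos (by linarith) hd)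
    have ht1 : t ≤ 1 := min_le_left _ _
    have hmem := (convex_convexHull ℝ Z).add_smul_sub_mem_interior ha hy ⟨ht0, ht1⟩
    have hlt := hf _ hmem
    rw [map_add, map_smul, map_sub, smul_eq_mul] at hlt
    have ht2 : t ≤ (f a - f x) / (f a - f y) := min_le_right _ _
    have h5 : t * (f a - f y) ≤ f a - f x := by
      calc t * (f a - f y) ≤ ((f a - f x) / (f a - f y)) * (f a - f y) :=
            mul_le_mul_of_nonneg_right ht2 hd.le
        _ = f a - f x := div_mul_cancel₀ _ hd.ne'
    nlinarith
  have hxZ : x ∈ convexHull ℝ (↑hZ.toFinset : Set Plane) := by rwa [hZ.coe_toFinset]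
  rw [Finset.mem_convexHull'] at hxZ
  obtain ⟨w, hw0, hw1, hwx⟩ := hxZ
  have hfx : f x = ∑ z ∈ hZ.toFinset, w z * f z := by
    rw [← hwx, map_sum]
    simp [map_smul]
  have hkey : ∀ z ∈ hZ.toFinset, w z ≠ 0 → f z = f x := by
    intro z hz hwz
    by_contra hne
    have hzZ : z ∈ Z := hZ.mem_toFinset.1 hz
    have hzlt : f z < f x := lt_of_le_of_ne (hle z (subset_convexHull ℝ Z hzZ)) hne
    have hwzpos : 0 < w z := lt_of_le_of_ne (hw0 z hz) (Ne.symm hwz)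
    have hlt : ∑ u ∈ hZ.toFinset, w u * f u < ∑ u ∈ hZ.toFinset, w u * f x := by
      apply Finset.sum_lt_sum
      · intro i hi
        exact mul_le_mul_of_nonneg_left (hle i (subset_convexHull ℝ Z (hZ.mem_toFinset.1 hi)))
          (hw0 i hi)
      · exact ⟨z, hz, mul_lt_mul_of_pos_left hzlt hwzpos⟩
    rw [← Finset.sum_mul, hw1, one_mul] at hlt
    linarith [hfx ▸ hlt]
  set S : Set Plane := Z ∩ {z | f z = f x} with hSdef
  have hxS : x ∈ convexHull ℝ S := by
    have hx' : x ∈ convexHull ℝ ((hZ.toFinset.filter (fun z => w z ≠ 0) : Finset Plane) : Set Plane) := by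
      rw [Finset.mem_convexHull']
      refine ⟨w, fun u hu => hw0 u (Finset.mem_of_mem_filter u hu), ?_, ?_⟩
      · rw [Finset.sum_filter_of_ne (fun u _ h => h), hw1]
      · rw [Finset.sum_filter_of_ne, hwx]
        intro u _ h hw
        exact h (by rw [hw, zero_smul])
    refine convexHull_mono ?_ hx'
    intro u hu
    rw [Finset.coe_filter, Set.mem_setOf_eq] at hu
    exact ⟨hZ.mem_toFinset.1 hu.1, hkey u hu.1 hu.2⟩
  have hSne : S.Nonempty := by
    by_contra h
    rw [Set.not_nonempty_iff_eq_empty] at h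
    rw [h, convexHull_empty] at hxS
    exact hxS
  have hScol : Collinear ℝ S :=
    (collinear_level ⟨y, x, ne_of_lt hylt⟩ (f x)).subset Set.inter_subset_right
  obtain ⟨a, haS, b, hbS, hsub⟩ :=
    collinear_hull_subset_segment (hZ.subset Set.inter_subset_left) hSne hScol
  exact ⟨a, haS.1, b, hbS.1, hsub hxS⟩

/-- If `C` is a connected set avoiding every segment between points of a
finite set `Z`, and some point of `C` lies outside the convex hull of `Z`, then `C` is
disjoint from the convex hull of `Z`. -/
theorem connected_avoiding_segments_disjoint_convexHull
    (Z : Set Plane) (hZ : Z.Finite) (C : Set Plane) (hC : IsConnected C)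
    (hseg : ∀ z ∈ Z, ∀ z' ∈ Z, Disjoint (segment ℝ z z') C)
    (hout : ∃ p ∈ C, p ∉ convexHull ℝ Z) :
    Disjoint C (convexHull ℝ Z) := by
  obtain ⟨p, hpC, hpH⟩ := hout
  rcases Z.eq_empty_or_nonempty with rfl | hZne
  · simp
  by_cases hcol : Collinear ℝ Z
  · obtain ⟨a, ha, b, hb, hsub⟩ := collinear_hull_subset_segment hZ hZne hcol
    exact ((hseg a ha b hb).symm.mono_right hsub)
  · have hspan : affineSpan ℝ Z = ⊤ := by
      by_contra h
      apply hcol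
      rw [collinear_iff_finrank_le_one, ← direction_affineSpan]
      have hd : (affineSpan ℝ Z).direction ≠ ⊤ := by
        intro he
        exact h ((AffineSubspace.direction_eq_top_iff_of_nonempty
          ((affineSpan_nonempty (k := ℝ) (s := Z)).2 hZne)).1 he)
      have hlt : Module.finrank ℝ (affineSpan ℝ Z).direction < Module.finrank ℝ Plane :=
        Submodule.finrank_lt hd
      have h3 : Module.finrank ℝ Plane = 2 := finrank_euclideanSpace_fin
      omega
    have hint : (interior (convexHull ℝ Z)).Nonempty := by
      rw [(convex_convexHull ℝ Z).interior_nonempty_iff_affineSpan_eq_top, affineSpan_convexHull]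
      exact hspan
    have hHclosed : IsClosed (convexHull ℝ Z) := hZ.isClosed_convexHull ℝ
    have hCH : ∀ c ∈ C, c ∈ convexHull ℝ Z → c ∈ interior (convexHull ℝ Z) := by
      intro c hc hcH
      by_contra h
      have hfr : c ∈ frontier (convexHull ℝ Z) := ⟨subset_closure hcH, h⟩
      obtain ⟨a, ha, b, hb, hcseg⟩ := frontier_convexHull_subset_segments hZ hint c hfr
      exact Set.disjoint_left.1 (hseg a ha b hb) hcseg hc
    rw [Set.disjoint_right]
    intro q hqH hqC
    have hpre := hC.isPreconnected
    have hcov : C ⊆ interior (convexHull ℝ Z) ∪ (convexHull ℝ Z)ᶜ := by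
      intro c hc
      by_cases h : c ∈ convexHull ℝ Z
      · exact Or.inl (hCH c hc h)
      · exact Or.inr h
    obtain ⟨z, _, hz1, hz2⟩ := hpre (interior (convexHull ℝ Z)) (convexHull ℝ Z)ᶜ
      isOpen_interior hHclosed.isOpen_compl hcov ⟨q, hqC, hCH q hqC hqH⟩ ⟨p, hpC, hpH⟩
    exact hz2 (interior_subset hz1)


end
end

section
/- In every inside-obstacle representation (f, C) of a finite simple graph G, the vertices placed on the boundary of the convex hull of the point set form a cycle of G; precisely, if u and v are distinct vertices of G such that the closed segment [f u, f v] is contained in the frontier of the convex hull of the image of f, then u and v are adjacent in G. -/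
noncomputable section

/-- Any point outside a closed convex set lies in an unbounded connected subset of the
complement of the set (an open half-plane), hence its component in any larger complement
is unbounded. -/
lemma aux_halfplane {K : Set Plane} (hKc : Convex ℝ K) (hKcl : IsClosed K)
    {p : Plane} (hp : p ∉ K) {S : Set Plane} (hKS : Sᶜ ⊆ K) :
    p ∈ S ∧ ¬ Bornology.IsBounded (connectedComponentIn S p) := by
  obtain ⟨ℓ, c, hc, hpc⟩ := geometric_hahn_banach_closed_point hKc hKcl hp
  set H : Set Plane := {y | c < ℓ y} with hH
  have hpH : p ∈ H := hpc
  have hHS : H ⊆ S := by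
    intro y hy
    by_contra hyS
    exact absurd (hc y (hKS hyS)) (not_lt.2 (le_of_lt hy))
  have hpS : p ∈ S := hHS hpH
  refine ⟨hpS, fun hb => ?_⟩
  -- H is convex hence preconnected, so H ⊆ component of p
  have hHconv : Convex ℝ H := convex_halfSpace_gt (IsLinearMap.mk ℓ.map_add ℓ.map_smul) c
  have hHsub : H ⊆ connectedComponentIn S p :=
    hHconv.isPreconnected.subset_connectedComponentIn hpH hHS
  have hbH : Bornology.IsBounded H := hb.subset hHsub
  -- find 0 ≠ v with ℓ v = 0
  have hker : ∃ v : Plane, (ℓ : Plane →ₗ[ℝ] ℝ) v = 0 ∧ v ≠ 0 := by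
    by_contra h
    push_neg at h
    have hinj : Function.Injective (ℓ : Plane →ₗ[ℝ] ℝ) := by
      rw [← LinearMap.ker_eq_bot]
      exact (Submodule.eq_bot_iff _).2 fun v hv => h v hv
    have h2 := LinearMap.finrank_le_finrank_of_injective hinj
    simp [finrank_euclideanSpace_fin] at h2
  obtain ⟨v, hv0, hvne⟩ := hker
  have hv0' : ℓ v = 0 := hv0
  obtain ⟨r, hr⟩ := hbH.subset_closedBall p
  have hvnorm : 0 < ‖v‖ := norm_pos_iff.2 hvne
  set t : ℝ := (|r| + 1) / ‖v‖ with htdef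
  have hmem : p + t • v ∈ H := by
    have hval : ℓ (p + t • v) = ℓ p := by
      simp [map_add, map_smul, hv0']
    simpa [hH, hval] using hpc
  have hball := hr hmem
  rw [Metric.mem_closedBall, dist_eq_norm] at hball
  have ht : 0 ≤ t := div_nonneg (by positivity) hvnorm.le
  have h1 : ‖t • v‖ ≤ r := by simpa using hball
  rw [norm_smul, Real.norm_eq_abs, abs_of_nonneg ht] at h1
  rw [htdef, div_mul_cancel₀ _ hvnorm.ne'] at h1
  have := abs_nonneg r
  have := le_abs_self r
  linarith

/-- In an inside-obstacle representation, the vertices on the boundary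
of the convex hull of the point set form a cycle: if the segment between the points of two
distinct vertices lies in the frontier of the convex hull of the image, then the two
vertices are adjacent. -/
theorem insideObstacleRep_hull_boundary_adjacent
    {V : Type} [Fintype V] (G : SimpleGraph V) (f : V → Plane) (C : Set Plane)
    (hrep : IsInsideObstacleRep G f C) (u v : V) (huv : u ≠ v)
    (hseg : segment ℝ (f u) (f v) ⊆ frontier (convexHull ℝ (Set.range f))) :
    G.Adj u v := by
  obtain ⟨⟨hinj, hgen, hCopen, hCconn, hCdisj, hiff⟩, hinside⟩ := hrep
  rw [hiff u v huv]
  by_contra hnd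
  obtain ⟨x, hxseg, hxC⟩ := Set.not_disjoint_iff.1 hnd
  set K := convexHull ℝ (Set.range f) with hK
  have hKconv : Convex ℝ K := convex_convexHull ℝ _
  have hKcl : IsClosed K := ((Set.finite_range f).isCompact_convexHull (𝕜 := ℝ)).isClosed
  have hEK : edgeUnion G f ⊆ K := by
    refine Set.iUnion_subset fun a => Set.iUnion_subset fun b => Set.iUnion_subset fun _ => ?_
    exact segment_subset_convexHull (Set.mem_range_self a) (Set.mem_range_self b)
  -- x is on the frontier of K, so C (open nbhd of x) meets Kᶜ
  have hxfr : x ∈ frontier K := hseg hxseg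
  have hxcl : x ∈ closure Kᶜ := by
    rw [frontier_eq_closure_inter_closure] at hxfr
    exact hxfr.2
  obtain ⟨p, hpC, hpK⟩ := mem_closure_iff.1 hxcl C hCopen hxC
  -- p ∉ K, so by the half-plane lemma p ∈ outsideRegion
  have hKS : (edgeUnion G f)ᶜᶜ ⊆ K := by
    rw [compl_compl]; exact hEK
  obtain ⟨hpS, hpunb⟩ := aux_halfplane hKconv hKcl hpK hKS
  exact Set.disjoint_left.1 hinside hpC ⟨hpS, hpunb⟩


end
end

section
/- Let (f, C) be an inside-obstacle representation of a finite simple graph G, and suppose u x y v is an induced path of G on four vertices (so ux, xy, yv are edges and uv, uy, xv are non-edges), where f(u) and f(v) lie on the frontier of the convex hull of the image of f, while f(x) and f(y) do not lie on that frontier. Then the closed segments [f u, f x] and [f y, f v] are disjoint, and the quadrilateral with vertices f(u), f(x), f(y), f(v) in this cyclic order is convex; in particular, the closed segments [f u, f y] and [f x, f v] intersect. -/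
set_option maxHeartbeats 1600000

noncomputable section

namespace ObstAux

/-! ### Elementary planar linear algebra -/

/-- 2D cross-product based affine functional vanishing on the line through `P`, `Q`. -/
def lin (P Q z : Plane) : ℝ := (z 0 - P 0) * (Q 1 - P 1) - (z 1 - P 1) * (Q 0 - P 0)

lemma coord_add (a b : Plane) (i : Fin 2) : (a + b) i = a i + b i := rfl
lemma coord_sub (a b : Plane) (i : Fin 2) : (a - b) i = a i - b i := rfl
lemma coord_smul (t : ℝ) (a : Plane) (i : Fin 2) : (t • a) i = t * a i := rfl

lemma plane_ext {a b : Plane} (h0 : a 0 = b 0) (h1 : a 1 = b 1) : a = b := by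
  ext i; fin_cases i <;> assumption

lemma lin_self_left (P Q : Plane) : lin P Q P = 0 := by simp [lin]
lemma lin_swap (P Q z : Plane) : lin Q P z = - lin P Q z := by simp [lin]; ring
lemma lin_self_right (P Q : Plane) : lin P Q Q = 0 := by simp [lin]; ring

/-- evaluation on two-parameter affine combinations -/
lemma lin_eval3 (P Q X Y Z : Plane) (s t : ℝ) :
    lin P Q (X + s • (Y - X) + t • (Z - X)) =
      lin P Q X + s * (lin P Q Y - lin P Q X) + t * (lin P Q Z - lin P Q X) := by
  simp only [lin, coord_add, coord_sub, coord_smul]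
  ring

lemma lin_eval (P Q X Y : Plane) (t : ℝ) :
    lin P Q (X + t • (Y - X)) = (1 - t) * lin P Q X + t * lin P Q Y := by
  simp only [lin, coord_add, coord_sub, coord_smul]
  ring

lemma lin_continuous (P Q : Plane) : Continuous (lin P Q) := by
  have h0 : Continuous fun z : Plane => z 0 := PiLp.continuous_apply 2 _ (0 : Fin 2)
  have h1 : Continuous fun z : Plane => z 1 := PiLp.continuous_apply 2 _ (1 : Fin 2)
  unfold lin
  fun_prop

lemma plane_ne_of (a b : Plane) (h : a ≠ b) : a - b ≠ 0 := sub_ne_zero.mpr h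

/-- If `lin P Q z = 0` and `P ≠ Q` then `z` lies on the line through `P`, `Q`. -/
lemma lin_param {P Q z : Plane} (hPQ : P ≠ Q) (h : lin P Q z = 0) :
    ∃ t : ℝ, z = P + t • (Q - P) := by
  have hv : Q 0 - P 0 ≠ 0 ∨ Q 1 - P 1 ≠ 0 := by
    by_contra hc
    push_neg at hc
    exact hPQ (plane_ext (by linarith [hc.1]) (by linarith [hc.2])).symm
  unfold lin at h
  rcases hv with hv | hv
  · refine ⟨(z 0 - P 0) / (Q 0 - P 0), plane_ext ?_ ?_⟩ <;>
      simp only [coord_add, coord_smul, coord_sub] <;> field_simp <;> nlinarith [h]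
  · refine ⟨(z 1 - P 1) / (Q 1 - P 1), plane_ext ?_ ?_⟩ <;>
      simp only [coord_add, coord_smul, coord_sub] <;> field_simp <;> nlinarith [h]

/-- `lin`-degenerate triples are collinear. -/
lemma collinear_of_lin_eq_zero {P Q R : Plane} (h : lin P Q R = 0) :
    Collinear ℝ ({P, Q, R} : Set Plane) := by
  by_cases hPQ : P = Q
  · subst hPQ
    rw [Set.insert_comm, Set.insert_eq_self.2 (by simp)]
    exact collinear_pair ℝ P R
  obtain ⟨t, ht⟩ := lin_param hPQ h
  rw [collinear_iff_exists_forall_eq_smul_vadd]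
  refine ⟨P, Q - P, ?_⟩
  rintro q (rfl | rfl | rfl)
  · exact ⟨0, by simp⟩
  · exact ⟨1, by simp⟩
  · exact ⟨t, by simp [ht]; module⟩

/-- Cramer decomposition in the affine basis at `P` given by `Q`, `R`. -/
lemma decomp {P Q R : Plane} (h : lin P Q R ≠ 0) (z : Plane) :
    ∃ α β : ℝ, z = P + α • (Q - P) + β • (R - P) := by
  set a := Q 0 - P 0; set b := R 0 - P 0; set c := Q 1 - P 1; set d := R 1 - P 1
  set zx := z 0 - P 0; set zy := z 1 - P 1
  have hdet : a * d - b * c ≠ 0 := by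
    intro hc; apply h; unfold lin; linear_combination -hc
  refine ⟨(zx * d - b * zy) / (a * d - b * c), (a * zy - zx * c) / (a * d - b * c),
    plane_ext ?_ ?_⟩ <;> simp only [coord_add, coord_smul, coord_sub] <;> field_simp [show d * a - b * c ≠ 0 by rwa [mul_comm d a]] <;> simp only [a, b, c, d, zx, zy] <;> ring

/-- Classification of the points of the line through `P ≠ Q`. -/
lemma classify_line {P Q z : Plane} (hPQ : P ≠ Q) (h : lin P Q z = 0) :
    z = P ∨ z = Q ∨ (∃ t : ℝ, (0 < t ∧ t < 1) ∧ z = P + t • (Q - P)) ∨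
    (∃ t : ℝ, 0 < t ∧ z = P + t • (P - Q)) ∨ (∃ t : ℝ, 0 < t ∧ z = Q + t • (Q - P)) := by
  obtain ⟨t, rfl⟩ := lin_param hPQ h
  rcases lt_trichotomy t 0 with ht | rfl | ht
  · right; right; right; left
    exact ⟨-t, by linarith, by module⟩
  · left; simp
  · rcases lt_trichotomy t 1 with ht1 | rfl | ht1
    · right; right; left; exact ⟨t, ⟨ht, ht1⟩, rfl⟩
    · right; left; module
    · right; right; right; right
      exact ⟨t - 1, by linarith, by module⟩

/-- normalized affine functional of a line, positive at a chosen reference point -/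
lemma exists_norm (P Q R : Plane) (h : lin P Q R ≠ 0) :
    ∃ F : Plane → ℝ, Continuous F ∧
      (∀ X Y : Plane, ∀ t : ℝ, F (X + t • (Y - X)) = (1 - t) * F X + t * F Y) ∧
      (∀ X Y Z : Plane, ∀ s t : ℝ, F (X + s • (Y - X) + t • (Z - X)) =
        F X + s * (F Y - F X) + t * (F Z - F X)) ∧
      F P = 0 ∧ F Q = 0 ∧ 0 < F R ∧ (∀ z : Plane, F z = 0 ↔ lin P Q z = 0) := by
  rcases lt_or_gt_of_ne h with hneg | hpos
  · refine ⟨fun z => - lin P Q z, (lin_continuous P Q).neg, ?_, ?_, ?_, ?_, ?_, ?_⟩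
    · intro X Y t
      show - lin P Q (X + t • (Y - X)) = (1 - t) * (- lin P Q X) + t * (- lin P Q Y)
      rw [lin_eval]; ring
    · intro X Y Z s t
      show - lin P Q (X + s • (Y - X) + t • (Z - X)) = - lin P Q X
        + s * ((- lin P Q Y) - (- lin P Q X)) + t * ((- lin P Q Z) - (- lin P Q X))
      rw [lin_eval3]; ring
    · simp [lin_self_left]
    · simp [lin_self_right]
    · simpa using hneg
    · intro z; simp
  · refine ⟨lin P Q, lin_continuous P Q, ?_, ?_, ?_, ?_, ?_, ?_⟩
    · intro X Y t; rw [lin_eval]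
    · intro X Y Z s t; rw [lin_eval3]
    · exact lin_self_left P Q
    · exact lin_self_right P Q
    · exact hpos
    · exact fun z => Iff.rfl

/-- normalized affine functional of a line, negative at a chosen reference point -/
lemma exists_norm_neg (P Q R : Plane) (h : lin P Q R ≠ 0) :
    ∃ F : Plane → ℝ, Continuous F ∧
      (∀ X Y : Plane, ∀ t : ℝ, F (X + t • (Y - X)) = (1 - t) * F X + t * F Y) ∧
      (∀ X Y Z : Plane, ∀ s t : ℝ, F (X + s • (Y - X) + t • (Z - X)) =
        F X + s * (F Y - F X) + t * (F Z - F X)) ∧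
      F P = 0 ∧ F Q = 0 ∧ F R < 0 ∧ (∀ z : Plane, F z = 0 ↔ lin P Q z = 0) := by
  obtain ⟨F, hc, he, he3, hP, hQ, hR, hz⟩ := exists_norm P Q R h
  refine ⟨fun z => - F z, hc.neg, ?_, ?_, by simp [hP], by simp [hQ], by simpa using hR, ?_⟩
  · intro X Y t
    show - F (X + t • (Y - X)) = (1 - t) * (- F X) + t * (- F Y)
    rw [he]; ring
  · intro X Y Z s t
    show - F (X + s • (Y - X) + t • (Z - X)) = - F X
      + s * ((- F Y) - (- F X)) + t * ((- F Z) - (- F X))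
    rw [he3]; ring
  · intro z
    show - F z = 0 ↔ _
    rw [← hz]; simp


lemma sepCore {C U : Set Plane} (hC : IsPreconnected C) (hU : IsOpen U)
    (hfr : ∀ z ∈ C, z ∉ frontier U) {c c' : Plane} (hc : c ∈ C) (hcU : c ∈ U)
    (hc' : c' ∈ C) (hc'U : c' ∉ closure U) : False := by
  have hsub : C ⊆ U ∪ (closure U)ᶜ := by
    intro z hz
    by_cases hcl : z ∈ closure U
    · left
      have hz' := hfr z hz
      rw [frontier, hU.interior_eq] at hz'
      by_contra hzU
      exact hz' ⟨hcl, hzU⟩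
    · exact Or.inr hcl
  obtain ⟨w, hwC, hwU, hwc⟩ := hC U (closure U)ᶜ hU isClosed_closure.isOpen_compl hsub
    ⟨c, hc, hcU⟩ ⟨c', hc', hc'U⟩
  exact hwc (subset_closure hwU)



lemma sepAlpha (A B D E : Plane) (C : Set Plane) (hC : IsPreconnected C)
    (h m : Plane → ℝ)
    (hcont : Continuous h) (mcont : Continuous m)
    (hA : h A = 0) (hB : h B = 0) (mD : m D = 0) (mE : m E = 0)
    (hD : 0 < h D) (hE : h E < 0) (mA : m A < 0) (mB : 0 < m B)
    (heh : ∀ X Y : Plane, ∀ t : ℝ, h (X + t • (Y - X)) = (1-t) * h X + t * h Y)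
    (hem : ∀ X Y : Plane, ∀ t : ℝ, m (X + t • (Y - X)) = (1-t) * m X + t * m Y)
    (wAB : ∀ z ∈ C, h z = 0 → ∃ t : ℝ, 1 < t ∧ z = A + t • (B - A))
    (wDE : ∀ z ∈ C, m z = 0 → ∃ t : ℝ, 1 < t ∧ z = E + t • (D - E))
    (c1 c2 : Plane) (hc1 : c1 ∈ C) (hc2 : c2 ∈ C)
    (t1 : ℝ) (ht1 : t1 ∈ Set.Ioo (0:ℝ) 1) (hc1e : c1 = A + t1 • (D - A))
    (t2 : ℝ) (ht2 : t2 ∈ Set.Ioo (0:ℝ) 1) (hc2e : c2 = A + t2 • (E - A)) : False := by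
  set U : Set Plane := {z | h z < 0 ∧ m z < 0} with hUdef
  have hUopen : IsOpen U := by
    have : U = {z | h z < 0} ∩ {z | m z < 0} := rfl
    rw [this]
    exact (isOpen_lt hcont continuous_const).inter (isOpen_lt mcont continuous_const)
  have hclU : closure U ⊆ {z | h z ≤ 0 ∧ m z ≤ 0} := by
    apply closure_minimal
    · intro z hz; exact ⟨hz.1.le, hz.2.le⟩
    · have : {z : Plane | h z ≤ 0 ∧ m z ≤ 0} = {z | h z ≤ 0} ∩ {z | m z ≤ 0} := rfl
      rw [this]
      exact (isClosed_le hcont continuous_const).inter (isClosed_le mcont continuous_const)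
  apply sepCore hC hUopen ?_ hc2 ?_ hc1 ?_
  · -- no C-point on the frontier
    intro z hz hzfr
    have hzw : h z ≤ 0 ∧ m z ≤ 0 := hclU (frontier_subset_closure hzfr)
    have hznU : z ∉ U := by
      rw [frontier, hUopen.interior_eq] at hzfr; exact hzfr.2
    have hz0 : h z = 0 ∨ m z = 0 := by
      rcases lt_or_eq_of_le hzw.1 with h1 | h1
      · rcases lt_or_eq_of_le hzw.2 with h2 | h2
        · exact absurd ⟨h1, h2⟩ hznU
        · exact Or.inr h2
      · exact Or.inl h1
    rcases hz0 with hz0 | hz0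
    · obtain ⟨t, ht, rfl⟩ := wAB z hz hz0
      have : m (A + t • (B - A)) = (1-t) * m A + t * m B := hem A B t
      nlinarith [hzw.2]
    · obtain ⟨t, ht, rfl⟩ := wDE z hz hz0
      have : h (E + t • (D - E)) = (1-t) * h E + t * h D := heh E D t
      nlinarith [hzw.1]
  · -- c2 ∈ U
    constructor
    · have : h c2 = (1-t2) * h A + t2 * h E := by rw [hc2e]; exact heh A E t2
      nlinarith [ht2.1, ht2.2]
    · have : m c2 = (1-t2) * m A + t2 * m E := by rw [hc2e]; exact hem A E t2
      nlinarith [ht2.1, ht2.2]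
  · -- c1 ∉ closure U
    intro hcl
    have := (hclU hcl).1
    have : h c1 = (1-t1) * h A + t1 * h D := by rw [hc1e]; exact heh A D t1
    nlinarith [ht1.1, ht1.2, (hclU hcl).1]


lemma sepGamma (A B D E : Plane) (C : Set Plane) (hC : IsPreconnected C)
    (g h n m : Plane → ℝ)
    (gc : Continuous g) (hcn : Continuous h) (nc : Continuous n) (mc : Continuous m)
    (gA : g A = 0) (gD : g D = 0) (hA : h A = 0) (hB : h B = 0)
    (nB : n B = 0) (nD : n D = 0) (mD : m D = 0) (mE : m E = 0)
    (gB : 0 < g B) (gE : 0 < g E) (hD : 0 < h D) (hE : h E < 0)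
    (nA : n A < 0) (nE : 0 < n E) (mA : m A < 0) (mB : m B < 0)
    (eg : ∀ X Y : Plane, ∀ t : ℝ, g (X + t • (Y - X)) = (1-t) * g X + t * g Y)
    (eh : ∀ X Y : Plane, ∀ t : ℝ, h (X + t • (Y - X)) = (1-t) * h X + t * h Y)
    (en : ∀ X Y : Plane, ∀ t : ℝ, n (X + t • (Y - X)) = (1-t) * n X + t * n Y)
    (em : ∀ X Y : Plane, ∀ t : ℝ, m (X + t • (Y - X)) = (1-t) * m X + t * m Y)
    (wAB : ∀ z ∈ C, h z = 0 → ∃ t : ℝ, 1 < t ∧ z = A + t • (B - A))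
    (wDE : ∀ z ∈ C, m z = 0 → ∃ t : ℝ, 1 < t ∧ z = E + t • (D - E))
    (wBD : ∀ z ∈ C, n z = 0 →
      (∃ t : ℝ, 1 < t ∧ z = D + t • (B - D)) ∨ (∃ t : ℝ, 1 < t ∧ z = B + t • (D - B)))
    (wAD : ∀ z ∈ C, g z = 0 → ∃ t : ℝ, (t ∈ Set.Ioo (0:ℝ) 1 ∨ 1 < t) ∧ z = A + t • (D - A))
    (c1 c2 : Plane) (hc1 : c1 ∈ C) (hc2 : c2 ∈ C)
    (t1 : ℝ) (ht1 : t1 ∈ Set.Ioo (0:ℝ) 1) (hc1e : c1 = A + t1 • (D - A))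
    (t2 : ℝ) (ht2 : t2 ∈ Set.Ioo (0:ℝ) 1) (hc2e : c2 = A + t2 • (E - A)) : False := by
  set U : Set Plane := {z | 0 < g z ∧ h z < 0 ∧ m z < 0} ∪ {z | 0 < n z ∧ m z < 0} with hUdef
  have hUopen : IsOpen U := by
    apply IsOpen.union
    · exact (isOpen_lt continuous_const gc).inter
        ((isOpen_lt hcn continuous_const).inter (isOpen_lt mc continuous_const))
    · exact (isOpen_lt continuous_const nc).inter (isOpen_lt mc continuous_const)
  have hclU : closure U ⊆ {z | 0 ≤ g z ∧ h z ≤ 0 ∧ m z ≤ 0} ∪ {z | 0 ≤ n z ∧ m z ≤ 0} := by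
    rw [closure_union]
    apply Set.union_subset_union
    · apply closure_minimal
      · exact fun z hz => ⟨hz.1.le, hz.2.1.le, hz.2.2.le⟩
      · exact (isClosed_le continuous_const gc).inter
          ((isClosed_le hcn continuous_const).inter (isClosed_le mc continuous_const))
    · apply closure_minimal
      · exact fun z hz => ⟨hz.1.le, hz.2.le⟩
      · exact (isClosed_le continuous_const nc).inter (isClosed_le mc continuous_const)
  apply sepCore hC hUopen ?_ hc2 ?_ hc1 ?_
  · -- frontier is C-free
    intro z hz hzfr
    have hzw := hclU (frontier_subset_closure hzfr)
    have hznU : z ∉ U := by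
      rw [frontier, hUopen.interior_eq] at hzfr; exact hzfr.2
    have hnQ1 : ¬ (0 < g z ∧ h z < 0 ∧ m z < 0) := fun hq => hznU (Or.inl hq)
    have hnQ2 : ¬ (0 < n z ∧ m z < 0) := fun hq => hznU (Or.inr hq)
    rcases hzw with ⟨hg0, hh0, hm0⟩ | ⟨hn0, hm0⟩
    · have hcase : g z = 0 ∨ h z = 0 ∨ m z = 0 := by
        by_contra hcon
        push_neg at hcon
        exact hnQ1 ⟨lt_of_le_of_ne hg0 (Ne.symm hcon.1),
          lt_of_le_of_ne hh0 hcon.2.1, lt_of_le_of_ne hm0 hcon.2.2⟩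
      rcases hcase with h0 | h0 | h0
      · obtain ⟨t, ht, rfl⟩ := wAD z hz h0
        have e1 : h (A + t • (D - A)) = t * h D := by rw [eh A D t, hA]; ring
        have ht0 : 0 < t := by rcases ht with ht | ht; exacts [ht.1, by linarith]
        nlinarith [mul_pos ht0 hD]
      · obtain ⟨t, ht, rfl⟩ := wAB z hz h0
        have en1 : n (A + t • (B - A)) = (1-t) * n A := by rw [en A B t, nB]; ring
        have hnpos : 0 < n (A + t • (B - A)) := by nlinarith [mul_pos_of_neg_of_neg (by linarith : 1 - t < 0) nA]
        have hmz : m (A + t • (B - A)) = 0 := by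
          rcases lt_or_eq_of_le hm0 with hm | hm
          · exact absurd ⟨hnpos, hm⟩ hnQ2
          · exact hm
        obtain ⟨s, hs, hzz⟩ := wDE _ hz hmz
        have e2 : h (E + s • (D - E)) = (1-s) * h E + s * h D := eh E D s
        rw [← hzz] at e2
        nlinarith [mul_pos_of_neg_of_neg (by linarith : 1 - s < 0) hE, mul_pos (by linarith : (0:ℝ) < s) hD]
      · obtain ⟨s, hs, rfl⟩ := wDE z hz h0
        have e2 : h (E + s • (D - E)) = (1-s) * h E + s * h D := eh E D s
        nlinarith [mul_pos_of_neg_of_neg (by linarith : 1 - s < 0) hE, mul_pos (by linarith : (0:ℝ) < s) hD]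
    · have hcase : n z = 0 ∨ m z = 0 := by
        by_contra hcon
        push_neg at hcon
        exact hnQ2 ⟨lt_of_le_of_ne hn0 (Ne.symm hcon.1), lt_of_le_of_ne hm0 hcon.2⟩
      rcases hcase with h0 | h0
      · rcases wBD z hz h0 with ⟨t, ht, rfl⟩ | ⟨t, ht, rfl⟩
        · refine hnQ1 ⟨?_, ?_, ?_⟩
          · have e1 : g (D + t • (B - D)) = t * g B := by rw [eg D B t, gD]; ring
            nlinarith [mul_pos (by linarith : (0:ℝ) < t) gB]
          · have e1 : h (D + t • (B - D)) = (1-t) * h D := by rw [eh D B t, hB]; ring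
            nlinarith [mul_neg_of_neg_of_pos (by linarith : 1 - t < 0) hD]
          · have e1 : m (D + t • (B - D)) = t * m B := by rw [em D B t, mD]; ring
            nlinarith [mul_neg_of_pos_of_neg (by linarith : (0:ℝ) < t) mB]
        · have e1 : m (B + t • (D - B)) = (1-t) * m B := by rw [em B D t, mD]; ring
          nlinarith [mul_pos_of_neg_of_neg (by linarith : 1 - t < 0) mB]
      · obtain ⟨s, hs, rfl⟩ := wDE z hz h0
        have e1 : n (E + s • (D - E)) = (1-s) * n E := by rw [en E D s, nD]; ring
        nlinarith [mul_neg_of_neg_of_pos (by linarith : 1 - s < 0) nE]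
  · -- c2 ∈ U
    left
    have e1 : g c2 = t2 * g E := by rw [hc2e, eg A E t2, gA]; ring
    have e2 : h c2 = t2 * h E := by rw [hc2e, eh A E t2, hA]; ring
    have e3 : m c2 = (1-t2) * m A := by rw [hc2e, em A E t2, mE]; ring
    refine ⟨?_, ?_, ?_⟩
    · nlinarith [mul_pos ht2.1 gE]
    · nlinarith [mul_neg_of_pos_of_neg ht2.1 hE]
    · nlinarith [mul_neg_of_pos_of_neg (by linarith [ht2.2] : (0:ℝ) < 1 - t2) mA]
  · -- c1 ∉ closure U
    intro hcl
    have e1 : h c1 = t1 * h D := by rw [hc1e, eh A D t1, hA]; ring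
    have e2 : n c1 = (1-t1) * n A := by rw [hc1e, en A D t1, nD]; ring
    rcases hclU hcl with ⟨_, hh0, _⟩ | ⟨hn0, _⟩
    · nlinarith [mul_pos ht1.1 hD]
    · nlinarith [mul_neg_of_pos_of_neg (by linarith [ht1.2] : (0:ℝ) < 1 - t1) nA]


lemma sepBeta (A B D E : Plane) (C : Set Plane) (hC : IsPreconnected C)
    (g h n m r : Plane → ℝ)
    (gc : Continuous g) (hcn : Continuous h) (nc : Continuous n) (mc : Continuous m)
    (rc : Continuous r)
    (gA : g A = 0) (gD : g D = 0) (hA : h A = 0) (hB : h B = 0)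
    (nB : n B = 0) (nD : n D = 0) (mD : m D = 0) (mE : m E = 0)
    (rB : r B = 0) (rE : r E = 0)
    (gB : 0 < g B) (hD : 0 < h D)
    (nA : n A < 0) (nE : 0 < n E) (mA : m A < 0) (mB : m B < 0) (rA : 0 < r A)
    (eg : ∀ X Y : Plane, ∀ t : ℝ, g (X + t • (Y - X)) = (1-t) * g X + t * g Y)
    (eh : ∀ X Y : Plane, ∀ t : ℝ, h (X + t • (Y - X)) = (1-t) * h X + t * h Y)
    (en : ∀ X Y : Plane, ∀ t : ℝ, n (X + t • (Y - X)) = (1-t) * n X + t * n Y)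
    (em : ∀ X Y : Plane, ∀ t : ℝ, m (X + t • (Y - X)) = (1-t) * m X + t * m Y)
    (er : ∀ X Y : Plane, ∀ t : ℝ, r (X + t • (Y - X)) = (1-t) * r X + t * r Y)
    (wAB : ∀ z ∈ C, h z = 0 → ∃ t : ℝ, 1 < t ∧ z = A + t • (B - A))
    (wDE : ∀ z ∈ C, m z = 0 → ∃ t : ℝ, 1 < t ∧ z = E + t • (D - E))
    (wBD : ∀ z ∈ C, n z = 0 →
      (∃ t : ℝ, 1 < t ∧ z = D + t • (B - D)) ∨ (∃ t : ℝ, 1 < t ∧ z = B + t • (D - B)))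
    (wAD : ∀ z ∈ C, g z = 0 → ∃ t : ℝ, (t ∈ Set.Ioo (0:ℝ) 1 ∨ 1 < t) ∧ z = A + t • (D - A))
    (wBE : ∀ z ∈ C, r z = 0 →
      (∃ t : ℝ, t ∈ Set.Ioo (0:ℝ) 1 ∧ z = B + t • (E - B)) ∨
      (∃ t : ℝ, 1 < t ∧ z = E + t • (B - E)))
    (coneE : ∀ z ∈ C, 0 ≤ m z → r z ≤ 0 → False)
    (c1 c3 : Plane) (hc1 : c1 ∈ C) (hc3 : c3 ∈ C)
    (t1 : ℝ) (ht1 : t1 ∈ Set.Ioo (0:ℝ) 1) (hc1e : c1 = A + t1 • (D - A))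
    (t3 : ℝ) (ht3 : t3 ∈ Set.Ioo (0:ℝ) 1) (hc3e : c3 = B + t3 • (E - B)) : False := by
  set U : Set Plane := ({z | 0 < n z ∧ m z < 0} ∪ {z | 0 < g z ∧ h z < 0}) ∪
      {z | 0 < g z ∧ 0 < n z ∧ r z < 0} with hUdef
  have hUopen : IsOpen U := by
    apply IsOpen.union
    apply IsOpen.union
    · exact (isOpen_lt continuous_const nc).inter (isOpen_lt mc continuous_const)
    · exact (isOpen_lt continuous_const gc).inter (isOpen_lt hcn continuous_const)
    · exact (isOpen_lt continuous_const gc).inter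
        ((isOpen_lt continuous_const nc).inter (isOpen_lt rc continuous_const))
  have hclU : closure U ⊆ ({z | 0 ≤ n z ∧ m z ≤ 0} ∪ {z | 0 ≤ g z ∧ h z ≤ 0}) ∪
      {z | 0 ≤ g z ∧ 0 ≤ n z ∧ r z ≤ 0} := by
    rw [closure_union, closure_union]
    apply Set.union_subset_union
    apply Set.union_subset_union
    · apply closure_minimal
      · exact fun z hz => ⟨hz.1.le, hz.2.le⟩
      · exact (isClosed_le continuous_const nc).inter (isClosed_le mc continuous_const)
    · apply closure_minimal
      · exact fun z hz => ⟨hz.1.le, hz.2.le⟩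
      · exact (isClosed_le continuous_const gc).inter (isClosed_le hcn continuous_const)
    · apply closure_minimal
      · exact fun z hz => ⟨hz.1.le, hz.2.1.le, hz.2.2.le⟩
      · exact (isClosed_le continuous_const gc).inter
          ((isClosed_le continuous_const nc).inter (isClosed_le rc continuous_const))
  apply sepCore hC hUopen ?_ hc3 ?_ hc1 ?_
  · -- frontier free of C
    intro z hz hzfr
    have hzw := hclU (frontier_subset_closure hzfr)
    have hznU : z ∉ U := by
      rw [frontier, hUopen.interior_eq] at hzfr; exact hzfr.2
    have hnQ1 : ¬ (0 < n z ∧ m z < 0) := fun hq => hznU (Or.inl (Or.inl hq))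
    have hnQ2 : ¬ (0 < g z ∧ h z < 0) := fun hq => hznU (Or.inl (Or.inr hq))
    have hnQ3 : ¬ (0 < g z ∧ 0 < n z ∧ r z < 0) := fun hq => hznU (Or.inr hq)
    rcases hzw with (⟨hn0, hm0⟩ | ⟨hg0, hh0⟩) | ⟨hg0, hn0, hr0⟩
    · -- weak1
      have hcase : n z = 0 ∨ m z = 0 := by
        by_contra hcon
        push_neg at hcon
        exact hnQ1 ⟨lt_of_le_of_ne hn0 (Ne.symm hcon.1), lt_of_le_of_ne hm0 hcon.2⟩
      rcases hcase with h0 | h0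
      · rcases wBD z hz h0 with ⟨t, ht, rfl⟩ | ⟨t, ht, rfl⟩
        · refine hnQ2 ⟨?_, ?_⟩
          · have e1 : g (D + t • (B - D)) = t * g B := by rw [eg D B t, gD]; ring
            nlinarith [mul_pos (by linarith : (0:ℝ) < t) gB]
          · have e1 : h (D + t • (B - D)) = (1-t) * h D := by rw [eh D B t, hB]; ring
            nlinarith [mul_neg_of_neg_of_pos (by linarith : 1 - t < 0) hD]
        · have e1 : m (B + t • (D - B)) = (1-t) * m B := by rw [em B D t, mD]; ring
          nlinarith [mul_pos_of_neg_of_neg (by linarith : 1 - t < 0) mB]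
      · obtain ⟨s, hs, rfl⟩ := wDE z hz h0
        have e1 : n (E + s • (D - E)) = (1-s) * n E := by rw [en E D s, nD]; ring
        nlinarith [mul_neg_of_neg_of_pos (by linarith : 1 - s < 0) nE]
    · -- weak2
      have hcase : g z = 0 ∨ h z = 0 := by
        by_contra hcon
        push_neg at hcon
        exact hnQ2 ⟨lt_of_le_of_ne hg0 (Ne.symm hcon.1), lt_of_le_of_ne hh0 hcon.2⟩
      rcases hcase with h0 | h0
      · obtain ⟨t, ht, rfl⟩ := wAD z hz h0
        have e1 : h (A + t • (D - A)) = t * h D := by rw [eh A D t, hA]; ring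
        have ht0 : 0 < t := by rcases ht with ht | ht; exacts [ht.1, by linarith]
        nlinarith [mul_pos ht0 hD]
      · obtain ⟨t, ht, rfl⟩ := wAB z hz h0
        refine hnQ3 ⟨?_, ?_, ?_⟩
        · have e1 : g (A + t • (B - A)) = t * g B := by rw [eg A B t, gA]; ring
          nlinarith [mul_pos (by linarith : (0:ℝ) < t) gB]
        · have e1 : n (A + t • (B - A)) = (1-t) * n A := by rw [en A B t, nB]; ring
          nlinarith [mul_pos_of_neg_of_neg (by linarith : 1 - t < 0) nA]
        · have e1 : r (A + t • (B - A)) = (1-t) * r A := by rw [er A B t, rB]; ring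
          nlinarith [mul_neg_of_neg_of_pos (by linarith : 1 - t < 0) rA]
    · -- weak3
      have hcase : g z = 0 ∨ n z = 0 ∨ r z = 0 := by
        by_contra hcon
        push_neg at hcon
        exact hnQ3 ⟨lt_of_le_of_ne hg0 (Ne.symm hcon.1),
          lt_of_le_of_ne hn0 (Ne.symm hcon.2.1), lt_of_le_of_ne hr0 hcon.2.2⟩
      rcases hcase with h0 | h0 | h0
      · obtain ⟨t, ht, rfl⟩ := wAD z hz h0
        rcases ht with ht | ht
        · have e1 : n (A + t • (D - A)) = (1-t) * n A := by rw [en A D t, nD]; ring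
          nlinarith [mul_neg_of_pos_of_neg (by linarith [ht.2] : (0:ℝ) < 1 - t) nA]
        · have e1 : m (A + t • (D - A)) = (1-t) * m A := by rw [em A D t, mD]; ring
          have : 0 ≤ m (A + t • (D - A)) := by
            nlinarith [mul_pos_of_neg_of_neg (by linarith : 1 - t < 0) mA]
          exact coneE _ hz this hr0
      · rcases wBD z hz h0 with ⟨t, ht, rfl⟩ | ⟨t, ht, rfl⟩
        · refine hnQ2 ⟨?_, ?_⟩
          · have e1 : g (D + t • (B - D)) = t * g B := by rw [eg D B t, gD]; ring
            nlinarith [mul_pos (by linarith : (0:ℝ) < t) gB]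
          · have e1 : h (D + t • (B - D)) = (1-t) * h D := by rw [eh D B t, hB]; ring
            nlinarith [mul_neg_of_neg_of_pos (by linarith : 1 - t < 0) hD]
        · have e1 : g (B + t • (D - B)) = (1-t) * g B := by rw [eg B D t, gD]; ring
          nlinarith [mul_neg_of_neg_of_pos (by linarith : 1 - t < 0) gB]
      · rcases wBE z hz h0 with ⟨t, ht, rfl⟩ | ⟨t, ht, rfl⟩
        · refine hnQ1 ⟨?_, ?_⟩
          · have e1 : n (B + t • (E - B)) = t * n E := by rw [en B E t, nB]; ring
            nlinarith [mul_pos ht.1 nE]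
          · have e1 : m (B + t • (E - B)) = (1-t) * m B := by rw [em B E t, mE]; ring
            nlinarith [mul_neg_of_pos_of_neg (by linarith [ht.2] : (0:ℝ) < 1 - t) mB]
        · have e1 : n (E + t • (B - E)) = (1-t) * n E := by rw [en E B t, nB]; ring
          nlinarith [mul_neg_of_neg_of_pos (by linarith : 1 - t < 0) nE]
  · -- c3 ∈ U
    left; left
    have e1 : n c3 = t3 * n E := by rw [hc3e, en B E t3, nB]; ring
    have e2 : m c3 = (1-t3) * m B := by rw [hc3e, em B E t3, mE]; ring
    exact ⟨by nlinarith [mul_pos ht3.1 nE],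
      by nlinarith [mul_neg_of_pos_of_neg (by linarith [ht3.2] : (0:ℝ) < 1 - t3) mB]⟩
  · -- c1 ∉ closure U
    intro hcl
    have e1 : h c1 = t1 * h D := by rw [hc1e, eh A D t1, hA]; ring
    have e2 : n c1 = (1-t1) * n A := by rw [hc1e, en A D t1, nD]; ring
    have hnn : n c1 < 0 := by
      nlinarith [mul_neg_of_pos_of_neg (by linarith [ht1.2] : (0:ℝ) < 1 - t1) nA]
    have hhh : 0 < h c1 := by nlinarith [mul_pos ht1.1 hD]
    rcases hclU hcl with (⟨hn0, _⟩ | ⟨_, hh0⟩) | ⟨_, hn0, _⟩ <;> linarith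


/-- Points of the obstacle lie in the convex hull of the vertices. -/
lemma obstacle_subset_hull {V : Type} [Fintype V] (G : SimpleGraph V) (f : V → Plane) (C : Set Plane)
    (v₀ : V)
    (hCedge : ∀ z ∈ C, z ∉ edgeUnion G f)
    (hCout : Disjoint C (outsideRegion G f)) :
    C ⊆ convexHull ℝ (Set.range f) := by
  intro z hz
  set K := convexHull ℝ (Set.range f) with hKdef
  by_contra hzK
  have hKconv : Convex ℝ K := convex_convexHull ℝ _
  have hKcl : IsClosed K := ((Set.finite_range f).isCompact_convexHull ℝ).isClosed
  obtain ⟨φ, u, hφK, hφz⟩ := geometric_hahn_banach_closed_point hKconv hKcl hzK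
  set H : Set Plane := {w | u < φ w} with hHdef
  have hHconv : Convex ℝ H := convex_halfSpace_gt ⟨φ.map_add, φ.map_smul⟩ u
  have hHsub : H ⊆ (edgeUnion G f)ᶜ := by
    intro w hw hwE
    have hwK : w ∈ K := by
      simp only [edgeUnion, Set.mem_iUnion] at hwE
      obtain ⟨a, b, hab, hseg⟩ := hwE
      exact (convex_convexHull ℝ _).segment_subset
        (subset_convexHull ℝ _ (Set.mem_range_self a))
        (subset_convexHull ℝ _ (Set.mem_range_self b)) hseg
    exact absurd hw (not_lt.2 (hφK w hwK).le)
  have hzH : z ∈ H := hφz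
  have hcomp : H ⊆ connectedComponentIn (edgeUnion G f)ᶜ z :=
    hHconv.isPreconnected.subset_connectedComponentIn hzH hHsub
  -- the component of z is bounded since z is not in the outside region
  have hzout : z ∉ outsideRegion G f := Set.disjoint_left.mp hCout hz
  have hbd : Bornology.IsBounded (connectedComponentIn (edgeUnion G f)ᶜ z) := by
    by_contra hnb
    exact hzout ⟨hCedge z hz, hnb⟩
  have hHb : Bornology.IsBounded H := hbd.subset hcomp
  obtain ⟨R, hR⟩ := isBounded_iff_forall_norm_le.mp hHb
  -- but H contains points of arbitrarily large norm
  set a := f v₀ with hadef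
  have haK : a ∈ K := subset_convexHull ℝ _ (Set.mem_range_self v₀)
  have hva : φ a < u := hφK a haK
  set w := z - a with hwdef
  have hφw : 0 < φ z - φ a := by linarith
  have hwne : w ≠ 0 := by
    intro h0
    have hza : z = a := by rwa [hwdef, sub_eq_zero] at h0
    have : φ z = φ a := by rw [hza]
    linarith
  have hwpos : 0 < ‖w‖ := norm_pos_iff.mpr hwne
  obtain ⟨nn, hn⟩ := exists_nat_gt ((R + ‖z‖) / ‖w‖)
  set p := z + (nn : ℝ) • w with hpdef
  have hpH : p ∈ H := by
    have : φ p = φ z + (nn : ℝ) * (φ z - φ a) := by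
      rw [hpdef, map_add, map_smul, hwdef, map_sub, smul_eq_mul]
    have hge : φ z ≤ φ p := by
      rw [this]; nlinarith [Nat.cast_nonneg (α := ℝ) nn, hφw]
    exact lt_of_lt_of_le hφz hge
  have hnorm : (nn : ℝ) * ‖w‖ - ‖z‖ ≤ ‖p‖ := by
    have h1 : ‖(nn : ℝ) • w‖ ≤ ‖p‖ + ‖z‖ := by
      have : (nn : ℝ) • w = p - z := by rw [hpdef]; abel
      rw [this]
      exact norm_sub_le _ _
    have h2 : ‖(nn : ℝ) • w‖ = (nn : ℝ) * ‖w‖ := by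
      rw [norm_smul, Real.norm_natCast]
    linarith
  have := hR p hpH
  have hcontr : R + ‖z‖ < (nn:ℝ) * ‖w‖ := by
    rw [div_lt_iff₀ hwpos] at hn
    linarith [hn]
  linarith

/-- Going beyond a non-interior point of a closed convex set, away from an interior point,
leaves the set. -/
lemma beyond_not_mem {K : Set Plane} (hK : Convex ℝ K) {P Q z : Plane}
    (hPi : P ∉ interior K) (hQ : Q ∈ interior K) {t : ℝ} (ht : 0 < t)
    (hz : z = P + t • (P - Q)) (hzK : z ∈ K) : False := by
  have hcombo : (t/(1+t)) • Q + (1/(1+t)) • z = P := by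
    have h1t : (1:ℝ) + t ≠ 0 := by positivity
    rw [hz]
    match_scalars <;> field_simp <;> ring
  have : P ∈ interior K := by
    rw [← hcombo]
    exact hK.combo_interior_self_mem_interior hQ hzK
      (by positivity) (by positivity) (by field_simp; ring)
  exact hPi this


/-- cone exclusion at a non-interior point over two interior points -/
lemma coneE_excl {K : Set Plane} (hK : Convex ℝ K) {B D E z : Plane}
    (hB : B ∈ interior K) (hD : D ∈ interior K) (hEi : E ∉ interior K)
    (hzK : z ∈ K) (hzE : z ≠ E) {α β : ℝ} (hα : α ≤ 0) (hβ : β ≤ 0)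
    (hze : z = E + α • (B - E) + β • (D - E)) : False := by
  set s := -α with hsdef
  set u := -β with hudef
  have hs : 0 ≤ s := by simp [hsdef]; linarith
  have hu : 0 ≤ u := by simp [hudef]; linarith
  have hsu : 0 < s + u := by
    rcases lt_or_eq_of_le (add_nonneg hs hu) with h | h
    · exact h
    · exfalso
      have hs0 : s = 0 := by linarith [hs, hu]
      have hu0 : u = 0 := by linarith [hs, hu]
      apply hzE
      rw [hze]
      have hα0 : α = 0 := by rw [hsdef] at hs0; linarith
      have hβ0 : β = 0 := by rw [hudef] at hu0; linarith
      rw [hα0, hβ0]; simp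
  have hsu1 : (0:ℝ) < 1 + s + u := by linarith
  set y := (s/(s+u)) • B + (u/(s+u)) • D with hydef
  have hyint : y ∈ interior K :=
    hK.interior hB hD (by positivity) (by positivity) (by field_simp)
  have hEeq : ((s+u)/(1+s+u)) • y + (1/(1+s+u)) • z = E := by
    have hne1 : -α + -β ≠ 0 := by linarith
    have hne2 : 1 + -α + -β ≠ 0 := by linarith
    rw [hydef, hze, hsdef, hudef]
    match_scalars <;> field_simp <;> ring
  apply hEi
  rw [← hEeq]
  exact hK.combo_interior_self_mem_interior hyint hzK (by positivity)
    (by positivity) (by field_simp; ring)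


end ObstAux

open ObstAux in
/-- In an inside-obstacle representation, for an induced path `u x y v`
with `f u, f v` on the frontier of the convex hull of the point set and `f x, f y` not on
it, the segments `[f u, f x]` and `[f y, f v]` are disjoint and the quadrilateral
`f u, f x, f y, f v` is convex, i.e. its diagonals `[f u, f y]` and `[f x, f v]`
intersect. -/
theorem insideObstacleRep_induced_path_convex_quadrilateral
    {V : Type} [Fintype V] (G : SimpleGraph V) (f : V → Plane) (C : Set Plane)
    (hrep : IsInsideObstacleRep G f C) (u x y v : V)
    (hdistinct : [u, x, y, v].Pairwise (· ≠ ·))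
    (he₁ : G.Adj u x) (he₂ : G.Adj x y) (he₃ : G.Adj y v)
    (hn₁ : ¬ G.Adj u v) (hn₂ : ¬ G.Adj u y) (hn₃ : ¬ G.Adj x v)
    (hu : f u ∈ frontier (convexHull ℝ (Set.range f)))
    (hv : f v ∈ frontier (convexHull ℝ (Set.range f)))
    (hx : f x ∉ frontier (convexHull ℝ (Set.range f)))
    (hy : f y ∉ frontier (convexHull ℝ (Set.range f))) :
    Disjoint (segment ℝ (f u) (f x)) (segment ℝ (f y) (f v)) ∧
    (segment ℝ (f u) (f y) ∩ segment ℝ (f x) (f v)).Nonempty := by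
  obtain ⟨⟨hinj, hGP, hCopen, hCconn, hCrange, hiff⟩, hCout⟩ := hrep
  -- vertex distinctness
  simp only [List.pairwise_cons, List.mem_cons, List.mem_singleton,
    List.not_mem_nil, List.Pairwise.nil] at hdistinct
  obtain ⟨hd1, hd2, hd3, -⟩ := hdistinct
  have hux : u ≠ x := hd1 x (by simp)
  have huy : u ≠ y := hd1 y (by simp)
  have huv : u ≠ v := hd1 v (by simp)
  have hxy : x ≠ y := hd2 y (by simp)
  have hxv : x ≠ v := hd2 v (by simp)
  have hyv : y ≠ v := hd3 v (by simp)
  set A := f u with hAdef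
  set B := f x with hBdef
  set D := f y with hDdef
  set E := f v with hEdef
  -- lin nondegeneracy from general position
  have hlinne : ∀ p q r : V, p ≠ q → p ≠ r → q ≠ r → lin (f p) (f q) (f r) ≠ 0 := by
    intro p q r hpq hpr hqr h0
    exact hGP (f p) ⟨p, rfl⟩ (f q) ⟨q, rfl⟩ (f r) ⟨r, rfl⟩
      (fun hh => hpq (hinj hh)) (fun hh => hpr (hinj hh)) (fun hh => hqr (hinj hh))
      (collinear_of_lin_eq_zero h0)
  have hABne : A ≠ B := fun h => hux (hinj h)
  have hADne : A ≠ D := fun h => huy (hinj h)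
  have hAEne : A ≠ E := fun h => huv (hinj h)
  have hBDne : B ≠ D := fun h => hxy (hinj h)
  have hBEne : B ≠ E := fun h => hxv (hinj h)
  have hDEne : D ≠ E := fun h => hyv (hinj h)
  -- hull facts
  set K := convexHull ℝ (Set.range f) with hKdef
  have hKconv : Convex ℝ K := convex_convexHull ℝ _
  have hmemK : ∀ w : V, f w ∈ K := fun w => subset_convexHull ℝ _ ⟨w, rfl⟩
  have hAint : A ∉ interior K := by rw [frontier] at hu; exact hu.2
  have hEint : E ∉ interior K := by rw [frontier] at hv; exact hv.2
  have hBint : B ∈ interior K := by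
    by_contra hbi
    apply hx; rw [frontier]; exact ⟨subset_closure (hmemK x), hbi⟩
  have hDint : D ∈ interior K := by
    by_contra hbi
    apply hy; rw [frontier]; exact ⟨subset_closure (hmemK y), hbi⟩
  -- obstacle facts
  have hCpre : IsPreconnected C := hCconn.isPreconnected
  have hCne' : ∀ z ∈ C, ∀ w : V, z ≠ f w := fun z hz w h =>
    (Set.disjoint_left.mp hCrange hz) ⟨w, h.symm⟩
  have hCedge : ∀ z ∈ C, z ∉ edgeUnion G f := by
    intro z hz hze
    simp only [edgeUnion, Set.mem_iUnion] at hze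
    obtain ⟨a, b, hab, hseg⟩ := hze
    exact Set.disjoint_left.mp ((hiff a b hab.ne).mp hab) hseg hz
  have hCK : C ⊆ K := obstacle_subset_hull G f C u hCedge hCout
  have havoid : ∀ {a b : V}, G.Adj a b → ∀ z ∈ C, z ∉ segment ℝ (f a) (f b) :=
    fun hab z hz hs => Set.disjoint_left.mp ((hiff _ _ hab.ne).mp hab) hs hz
  have htouch : ∀ a b : V, a ≠ b → ¬ G.Adj a b →
      ∃ z ∈ C, ∃ t : ℝ, (0 < t ∧ t < 1) ∧ z = f a + t • (f b - f a) := by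
    intro a b hne hnadj
    have hnd : ¬ Disjoint (segment ℝ (f a) (f b)) C := fun hd => hnadj ((hiff a b hne).mpr hd)
    obtain ⟨z, hzseg, hzC⟩ := Set.not_disjoint_iff.mp hnd
    rw [segment_eq_image'] at hzseg
    obtain ⟨t, htI, hte⟩ := hzseg
    simp only at hte
    refine ⟨z, hzC, t, ⟨?_, ?_⟩, hte.symm⟩
    · rcases lt_or_eq_of_le htI.1 with hlt | heq
      · exact hlt
      · exfalso; apply hCne' z hzC a; rw [← hte, ← heq]; simp
    · rcases lt_or_eq_of_le htI.2 with hlt | heq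
      · exact hlt
      · exfalso; apply hCne' z hzC b
        rw [← hte, heq]
        show f a + (1:ℝ) • (f b - f a) = f b
        module
  have hbeyond : ∀ {P Q z : Plane}, P ∉ interior K → Q ∈ interior K → z ∈ C →
      ∀ {t : ℝ}, 0 < t → z = P + t • (P - Q) → False := by
    intro P Q z hPi hQi hz t ht hze
    exact beyond_not_mem hKconv hPi hQi ht hze (hCK hz)
  -- membership of parametrized points in segments
  have hsegmem : ∀ (P Q : Plane) (t : ℝ), 0 ≤ t → t ≤ 1 → P + t • (Q - P) ∈ segment ℝ P Q := by
    intro P Q t h0 h1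
    rw [segment_eq_image']
    exact ⟨t, ⟨h0, h1⟩, rfl⟩
  -- the five windows
  have wABgen : ∀ z ∈ C, lin A B z = 0 → ∃ t : ℝ, 1 < t ∧ z = A + t • (B - A) := by
    intro z hz h0
    rcases classify_line hABne h0 with rfl | rfl | ⟨t, ht, rfl⟩ | ⟨t, ht, hze⟩ | ⟨t, ht, hze⟩
    · exact absurd rfl (hCne' _ hz u)
    · exact absurd rfl (hCne' _ hz x)
    · exact absurd (hsegmem A B t ht.1.le ht.2.le) (havoid he₁ _ hz)
    · exact absurd hze (fun hze => hbeyond hAint hBint hz ht hze)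
    · exact ⟨1 + t, by linarith, by rw [hze]; module⟩
  have wDEgen : ∀ z ∈ C, lin D E z = 0 → ∃ t : ℝ, 1 < t ∧ z = E + t • (D - E) := by
    intro z hz h0
    rcases classify_line hDEne h0 with rfl | rfl | ⟨t, ht, rfl⟩ | ⟨t, ht, hze⟩ | ⟨t, ht, hze⟩
    · exact absurd rfl (hCne' _ hz y)
    · exact absurd rfl (hCne' _ hz v)
    · exact absurd (hsegmem D E t ht.1.le ht.2.le) (havoid he₃ _ hz)
    · exact ⟨1 + t, by linarith, by rw [hze]; module⟩
    · exact absurd hze (fun hze => hbeyond hEint hDint hz ht hze)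
  have wBDgen : ∀ z ∈ C, lin B D z = 0 →
      (∃ t : ℝ, 1 < t ∧ z = D + t • (B - D)) ∨ (∃ t : ℝ, 1 < t ∧ z = B + t • (D - B)) := by
    intro z hz h0
    rcases classify_line hBDne h0 with rfl | rfl | ⟨t, ht, rfl⟩ | ⟨t, ht, hze⟩ | ⟨t, ht, hze⟩
    · exact absurd rfl (hCne' _ hz x)
    · exact absurd rfl (hCne' _ hz y)
    · exact absurd (hsegmem B D t ht.1.le ht.2.le) (havoid he₂ _ hz)
    · exact Or.inl ⟨1 + t, by linarith, by rw [hze]; module⟩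
    · exact Or.inr ⟨1 + t, by linarith, by rw [hze]; module⟩
  have wADgen : ∀ z ∈ C, lin A D z = 0 →
      ∃ t : ℝ, (t ∈ Set.Ioo (0:ℝ) 1 ∨ 1 < t) ∧ z = A + t • (D - A) := by
    intro z hz h0
    rcases classify_line hADne h0 with rfl | rfl | ⟨t, ht, rfl⟩ | ⟨t, ht, hze⟩ | ⟨t, ht, hze⟩
    · exact absurd rfl (hCne' _ hz u)
    · exact absurd rfl (hCne' _ hz y)
    · exact ⟨t, Or.inl ⟨ht.1, ht.2⟩, rfl⟩
    · exact absurd hze (fun hze => hbeyond hAint hDint hz ht hze)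
    · exact ⟨1 + t, Or.inr (by linarith), by rw [hze]; module⟩
  have wBEgen : ∀ z ∈ C, lin B E z = 0 →
      (∃ t : ℝ, t ∈ Set.Ioo (0:ℝ) 1 ∧ z = B + t • (E - B)) ∨
      (∃ t : ℝ, 1 < t ∧ z = E + t • (B - E)) := by
    intro z hz h0
    rcases classify_line hBEne h0 with rfl | rfl | ⟨t, ht, rfl⟩ | ⟨t, ht, hze⟩ | ⟨t, ht, hze⟩
    · exact absurd rfl (hCne' _ hz x)
    · exact absurd rfl (hCne' _ hz v)
    · exact Or.inl ⟨t, ⟨ht.1, ht.2⟩, rfl⟩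
    · exact Or.inr ⟨1 + t, by linarith, by rw [hze]; module⟩
    · exact absurd hze (fun hze => hbeyond hEint hBint hz ht hze)
  -- the touching points of the three non-edges
  obtain ⟨c1, hc1C, t1, ht1, hc1e⟩ := htouch u y huy hn₂
  obtain ⟨c2, hc2C, t2, ht2, hc2e⟩ := htouch u v huv hn₁
  obtain ⟨c3, hc3C, t3, ht3, hc3e⟩ := htouch x v hxv hn₃
  -- Goal 1
  have hGoal1 : Disjoint (segment ℝ A B) (segment ℝ D E) := by
    by_contra hnd
    obtain ⟨p, hp1, hp2⟩ := Set.not_disjoint_iff.mp hnd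
    rw [segment_eq_image'] at hp1 hp2
    obtain ⟨s, hsI, hse⟩ := hp1
    obtain ⟨w', hwI, hwe⟩ := hp2
    simp only at hse hwe
    have hs0 : 0 < s := by
      rcases lt_or_eq_of_le hsI.1 with hlt | heq
      · exact hlt
      · exfalso
        apply hlinne y v u hyv (Ne.symm huy) (Ne.symm huv)
        have hpA : p = A := by rw [← hse, ← heq]; simp
        have hform : A = D + w' • (E - D) := by rw [hwe, hpA]
        show lin D E A = 0
        rw [hform, lin_eval, lin_self_left, lin_self_right]; ring
    have hs1 : s < 1 := by
      rcases lt_or_eq_of_le hsI.2 with hlt | heq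
      · exact hlt
      · exfalso
        apply hlinne y v x hyv (Ne.symm hxy) (Ne.symm hxv)
        have hpB : p = B := by
          rw [← hse, heq]
          show A + (1:ℝ) • (B - A) = B
          module
        have hform : B = D + w' • (E - D) := by rw [hwe, hpB]
        show lin D E B = 0
        rw [hform, lin_eval, lin_self_left, lin_self_right]; ring
    have hw0 : 0 < w' := by
      rcases lt_or_eq_of_le hwI.1 with hlt | heq
      · exact hlt
      · exfalso
        apply hlinne u x y hux huy hxy
        have hpD : p = D := by rw [← hwe, ← heq]; simp
        have hform : D = A + s • (B - A) := by rw [hse, hpD]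
        show lin A B D = 0
        rw [hform, lin_eval, lin_self_left, lin_self_right]; ring
    have hw1 : w' < 1 := by
      rcases lt_or_eq_of_le hwI.2 with hlt | heq
      · exact hlt
      · exfalso
        apply hlinne u x v hux huv hxv
        have hpE : p = E := by
          rw [← hwe, heq]
          show D + (1:ℝ) • (E - D) = E
          module
        have hform : E = A + s • (B - A) := by rw [hse, hpE]
        show lin A B E = 0
        rw [hform, lin_eval, lin_self_left, lin_self_right]; ring
    obtain ⟨h, hhc, hhe, hhe3, hhA, hhB, hhD, hhiff⟩ :=
      exists_norm A B D (hlinne u x y hux huy hxy)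
    obtain ⟨m, hmc, hme, hme3, hmD, hmE, hmA, hmiff⟩ :=
      exists_norm_neg D E A (hlinne y v u hyv (Ne.symm huy) (Ne.symm huv))
    have hpeq : A + s • (B - A) = D + w' • (E - D) := by rw [hse, hwe]
    have hrel1 : (1 - w') * h D + w' * h E = 0 := by
      have h1 := hhe D E w'
      rw [← hpeq, hhe A B s, hhA, hhB] at h1
      linarith
    have hhE : h E < 0 := by
      by_contra hcc
      push_neg at hcc
      nlinarith [mul_pos (by linarith : (0:ℝ) < 1 - w') hhD, mul_nonneg hw0.le hcc]
    have hrel2 : (1 - s) * m A + s * m B = 0 := by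
      have h1 := hme A B s
      rw [hpeq, hme D E w', hmD, hmE] at h1
      linarith
    have hmB : 0 < m B := by
      by_contra hcc
      push_neg at hcc
      nlinarith [mul_neg_of_pos_of_neg (by linarith : (0:ℝ) < 1 - s) hmA,
        mul_nonpos_iff.mpr (Or.inr ⟨hcc, hs0.le⟩)]
    exact sepAlpha A B D E C hCpre h m hhc hmc hhA hhB hmD hmE hhD hhE hmA hmB hhe hme
      (fun z hz h0 => wABgen z hz ((hhiff z).mp h0))
      (fun z hz h0 => wDEgen z hz ((hmiff z).mp h0))
      c1 c2 hc1C hc2C t1 ⟨ht1.1, ht1.2⟩ hc1e t2 ⟨ht2.1, ht2.2⟩ hc2e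
  constructor
  · exact hGoal1
  · -- Goal 2: the diagonals cross
    obtain ⟨α, β, hEdec⟩ := decomp (hlinne u x y hux huy hxy) E
    have hval_AD : lin A D E = α * lin A D B := by
      calc lin A D E = lin A D (A + α • (B - A) + β • (D - A)) := by rw [← hEdec]
        _ = α * lin A D B := by rw [lin_eval3, lin_self_left, lin_self_right]; ring
    have hval_AB : lin A B E = β * lin A B D := by
      calc lin A B E = lin A B (A + α • (B - A) + β • (D - A)) := by rw [← hEdec]
        _ = β * lin A B D := by rw [lin_eval3, lin_self_left, lin_self_right]; ring
    have hval_BD : lin B D E = (1 - α - β) * lin B D A := by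
      calc lin B D E = lin B D (A + α • (B - A) + β • (D - A)) := by rw [← hEdec]
        _ = (1 - α - β) * lin B D A := by
          rw [lin_eval3, lin_self_left, lin_self_right]; ring
    have hα0 : α ≠ 0 := by
      intro h0
      apply hlinne u y v huy huv hyv
      show lin A D E = 0
      rw [hval_AD, h0]; ring
    have hβ0 : β ≠ 0 := by
      intro h0
      apply hlinne u x v hux huv hxv
      show lin A B E = 0
      rw [hval_AB, h0]; ring
    have hw0 : 1 - α - β ≠ 0 := by
      intro h0
      apply hlinne x y v hxy hxv hyv
      show lin B D E = 0
      rw [hval_BD, h0]; ring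
    rcases lt_or_gt_of_ne hα0 with hαn | hαp
    · rcases lt_or_gt_of_ne hβ0 with hβn | hβp
      · rcases lt_or_gt_of_ne hw0 with hwn | hwp
        · exfalso; linarith
        · -- u ∈ triangle BDE : contradiction with A on the hull boundary
          exfalso
          have hab : α + β < 0 := by linarith
          have habne : α + β ≠ 0 := ne_of_lt hab
          have hcB : 0 < α / (α + β) := div_pos_of_neg_of_neg hαn hab
          have hcD : 0 < β / (α + β) := div_pos_of_neg_of_neg hβn hab
          have hy1int : (α / (α + β)) • B + (β / (α + β)) • D ∈ interior K :=
            hKconv.interior hBint hDint hcB.le hcD.le (by field_simp)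
          apply hAint
          have hid : (-(α + β)/(1 - α - β)) • ((α / (α + β)) • B + (β / (α + β)) • D)
              + (1/(1 - α - β)) • E = A := by
            rw [hEdec]
            match_scalars <;> field_simp <;> ring
          rw [← hid]
          exact hKconv.combo_interior_self_mem_interior hy1int (hmemK v)
            (div_pos (by linarith) (by linarith))
            (le_of_lt (div_pos one_pos (by linarith))) (by field_simp; ring)
      · rcases lt_or_gt_of_ne hw0 with hwn | hwp
        · -- case δ : f y inside the triangle A B E
          exfalso
          have hβne : β ≠ 0 := ne_of_gt hβp
          have hdpos : 0 < -α / β := div_pos (by linarith) hβp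
          have hepos : 0 < -(1 - α - β) / β := div_pos (by linarith) hβp
          have hapos : 0 < 1 - (-α / β) - (-(1 - α - β) / β) := by
            have hh : 1 - (-α / β) - (-(1 - α - β) / β) = 1/β := by field_simp; try ring
            rw [hh]
            exact div_pos one_pos hβp
          have hDdec : D = E + (-α / β) • (B - E) + (-(1 - α - β) / β) • (A - E) := by
            rw [hEdec]
            match_scalars <;> field_simp <;> ring
          obtain ⟨g, hgc, hge, hge3, hgE0, hgB0, hgD, hgiff⟩ :=
            exists_norm E B D (hlinne v x y (Ne.symm hxv) (Ne.symm hyv) hxy)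
          obtain ⟨h, hhc, hhe, hhe3, hhE0, hhD0, hhB, hhiff⟩ :=
            exists_norm E D B (hlinne v y x (Ne.symm hyv) (Ne.symm hxv) (Ne.symm hxy))
          obtain ⟨n, hnc, hne, hne3, hnD0, hnB0, hnA, hniff⟩ :=
            exists_norm D B A (hlinne y x u (Ne.symm hxy) (Ne.symm huy) (Ne.symm hux))
          obtain ⟨m, hmc, hme, hme3, hmB0, hmA0, hmE, hmiff⟩ :=
            exists_norm_neg B A E (hlinne x u v (Ne.symm hux) hxv huv)
          have hcombo : ∀ (F : Plane → ℝ),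
              (∀ X Y Z : Plane, ∀ s t : ℝ, F (X + s • (Y - X) + t • (Z - X)) =
                F X + s * (F Y - F X) + t * (F Z - F X)) →
              F D = F E + (-α / β) * (F B - F E) + (-(1 - α - β) / β) * (F A - F E) := by
            intro F hF
            calc F D = F (E + (-α / β) • (B - E) + (-(1 - α - β) / β) • (A - E)) := by
                  rw [← hDdec]
              _ = _ := hF E B A _ _
          have hgA : 0 < g A := by
            have h2 : g D = (-(1 - α - β) / β) * g A := by
              have h1 := hcombo g hge3
              rw [hgE0, hgB0] at h1
              linear_combination h1
            by_contra hcc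
            push_neg at hcc
            linarith [mul_nonpos_iff.mpr (Or.inl ⟨hepos.le, hcc⟩), h2, hgD]
          have hhA : h A < 0 := by
            have h2 : (-α / β) * h B + (-(1 - α - β) / β) * h A = 0 := by
              have h1 := hcombo h hhe3
              rw [hhE0, hhD0] at h1
              linear_combination -h1
            by_contra hcc
            push_neg at hcc
            linarith [mul_pos hdpos hhB, mul_nonneg hepos.le hcc]
          have hnE : n E < 0 := by
            have h2 : (1 - (-α / β) - (-(1 - α - β) / β)) * n E
                + (-(1 - α - β) / β) * n A = 0 := by
              have h1 := hcombo n hne3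
              rw [hnD0, hnB0] at h1
              linear_combination -h1
            by_contra hcc
            push_neg at hcc
            linarith [mul_nonneg hapos.le hcc, mul_pos hepos hnA]
          have hmD : m D < 0 := by
            have h2 : m D = (1 - (-α / β) - (-(1 - α - β) / β)) * m E := by
              have h1 := hcombo m hme3
              rw [hmB0, hmA0] at h1
              linear_combination h1
            rw [h2]
            exact mul_neg_of_pos_of_neg hapos hmE
          have hc3e' : c3 = E + (1 - t3) • (B - E) := by rw [hc3e]; module
          have hc2e' : c2 = E + (1 - t2) • (A - E) := by rw [hc2e]; module
          exact sepGamma E D B A C hCpre g h n m hgc hhc hnc hmc hgE0 hgB0 hhE0 hhD0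
            hnD0 hnB0 hmB0 hmA0 hgD hgA hhB hhA hnE hnA hmE hmD hge hhe hne hme
            (fun z hz h0 => by
              have h2 := (hhiff z).mp h0
              rw [lin_swap] at h2
              exact wDEgen z hz (neg_eq_zero.mp h2))
            (fun z hz h0 => by
              have h2 := (hmiff z).mp h0
              rw [lin_swap] at h2
              exact wABgen z hz (neg_eq_zero.mp h2))
            (fun z hz h0 => by
              have h2 := (hniff z).mp h0
              rw [lin_swap] at h2
              exact (wBDgen z hz (neg_eq_zero.mp h2)).symm)
            (fun z hz h0 => by
              have h2 := (hgiff z).mp h0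
              rw [lin_swap] at h2
              rcases wBEgen z hz (neg_eq_zero.mp h2) with ⟨t, htI, hze⟩ | ⟨t, ht, hze⟩
              · exact ⟨1 - t, Or.inl ⟨by linarith [htI.2], by linarith [htI.1]⟩,
                  by rw [hze]; module⟩
              · exact ⟨t, Or.inr ht, hze⟩)
            c3 c2 hc3C hc2C (1 - t3) ⟨by linarith [ht3.2], by linarith [ht3.1]⟩ hc3e'
            (1 - t2) ⟨by linarith [ht2.2], by linarith [ht2.1]⟩ hc2e'
        · -- the crossing case: construct the intersection point
          have hden : (0:ℝ) < 1 - α := by linarith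
          refine ⟨A + (β / (1 - α)) • (D - A), ?_, ?_⟩
          · exact hsegmem A D _ (by positivity) (by rw [div_le_one hden]; linarith)
          · have hp2 : A + (β / (1 - α)) • (D - A) = B + (1/(1 - α)) • (E - B) := by
              rw [hEdec]
              match_scalars <;> field_simp <;> ring
            rw [hp2]
            exact hsegmem B E _ (by positivity) (by rw [div_le_one hden]; linarith)
    · rcases lt_or_gt_of_ne hβ0 with hβn | hβp
      · rcases lt_or_gt_of_ne hw0 with hwn | hwp
        · -- case γ : f x inside the triangle A D E
          exfalso
          have hαne : α ≠ 0 := ne_of_gt hαp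
          have hdpos : 0 < -β / α := div_pos (by linarith) hαp
          have hepos : 0 < 1 / α := div_pos one_pos hαp
          have hapos : 0 < 1 - (-β / α) - 1 / α := by
            have hh : 1 - (-β / α) - 1 / α = (α + β - 1)/α := by field_simp; try ring
            rw [hh]
            exact div_pos (by linarith) hαp
          have hBdec : B = A + (-β / α) • (D - A) + (1 / α) • (E - A) := by
            rw [hEdec]
            match_scalars <;> field_simp <;> ring
          obtain ⟨g, hgc, hge, hge3, hgA, hgD, hgB, hgiff⟩ :=
            exists_norm A D B (hlinne u y x huy hux (Ne.symm hxy))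
          obtain ⟨h, hhc, hhe, hhe3, hhA, hhB, hhD, hhiff⟩ :=
            exists_norm A B D (hlinne u x y hux huy hxy)
          obtain ⟨n, hnc, hne, hne3, hnB, hnD, hnE, hniff⟩ :=
            exists_norm B D E (hlinne x y v hxy hxv hyv)
          obtain ⟨m, hmc, hme, hme3, hmD, hmE, hmA, hmiff⟩ :=
            exists_norm_neg D E A (hlinne y v u hyv (Ne.symm huy) (Ne.symm huv))
          have hcombo : ∀ (F : Plane → ℝ),
              (∀ X Y Z : Plane, ∀ s t : ℝ, F (X + s • (Y - X) + t • (Z - X)) =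
                F X + s * (F Y - F X) + t * (F Z - F X)) →
              F B = F A + (-β / α) * (F D - F A) + (1 / α) * (F E - F A) := by
            intro F hF
            calc F B = F (A + (-β / α) • (D - A) + (1 / α) • (E - A)) := by rw [← hBdec]
              _ = _ := hF A D E _ _
          have hgE : 0 < g E := by
            have h2 : g B = (1 / α) * g E := by
              have h1 := hcombo g hge3
              rw [hgA, hgD] at h1
              linear_combination h1
            by_contra hcc
            push_neg at hcc
            linarith [mul_nonpos_iff.mpr (Or.inl ⟨hepos.le, hcc⟩), h2, hgB]
          have hhE : h E < 0 := by
            have h2 : (-β / α) * h D + (1 / α) * h E = 0 := by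
              have h1 := hcombo h hhe3
              rw [hhA, hhB] at h1
              linear_combination -h1
            by_contra hcc
            push_neg at hcc
            linarith [mul_pos hdpos hhD, mul_nonneg hepos.le hcc]
          have hnA : n A < 0 := by
            have h2 : (1 - (-β / α) - 1 / α) * n A + (1 / α) * n E = 0 := by
              have h1 := hcombo n hne3
              rw [hnB, hnD] at h1
              linear_combination -h1
            by_contra hcc
            push_neg at hcc
            linarith [mul_nonneg hapos.le hcc, mul_pos hepos hnE]
          have hmB : m B < 0 := by
            have h2 : m B = (1 - (-β / α) - 1 / α) * m A := by
              have h1 := hcombo m hme3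
              rw [hmD, hmE] at h1
              linear_combination h1
            rw [h2]
            exact mul_neg_of_pos_of_neg hapos hmA
          exact sepGamma A B D E C hCpre g h n m hgc hhc hnc hmc hgA hgD hhA hhB hnB hnD
            hmD hmE hgB hgE hhD hhE hnA hnE hmA hmB hge hhe hne hme
            (fun z hz h0 => wABgen z hz ((hhiff z).mp h0))
            (fun z hz h0 => wDEgen z hz ((hmiff z).mp h0))
            (fun z hz h0 => wBDgen z hz ((hniff z).mp h0))
            (fun z hz h0 => wADgen z hz ((hgiff z).mp h0))
            c1 c2 hc1C hc2C t1 ⟨ht1.1, ht1.2⟩ hc1e t2 ⟨ht2.1, ht2.2⟩ hc2e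
        · -- the segments [A,B] and [D,E] would cross : contradiction with Goal 1
          exfalso
          have hden : (0:ℝ) < 1 - β := by linarith
          have hmem1 : A + (α / (1 - β)) • (B - A) ∈ segment ℝ A B :=
            hsegmem A B _ (by positivity) (by rw [div_le_one hden]; linarith)
          have hp2 : A + (α / (1 - β)) • (B - A) = D + (1/(1 - β)) • (E - D) := by
            rw [hEdec]
            match_scalars <;> field_simp <;> ring
          have hmem2 : A + (α / (1 - β)) • (B - A) ∈ segment ℝ D E := by
            rw [hp2]
            exact hsegmem D E _ (by positivity) (by rw [div_le_one hden]; linarith)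
          exact Set.disjoint_left.mp hGoal1 hmem1 hmem2
      · rcases lt_or_gt_of_ne hw0 with hwn | hwp
        · -- case β : the segments [A,E] and [B,D] cross
          exfalso
          have hab : (0:ℝ) < α + β := by linarith
          have habne : α + β ≠ 0 := ne_of_gt hab
          have hs0 : 0 < 1/(α+β) := div_pos one_pos hab
          have hs1 : 1/(α+β) < 1 := by rw [div_lt_one hab]; linarith
          have ht0 : 0 < β/(α+β) := div_pos hβp hab
          have ht0' : β/(α+β) < 1 := by rw [div_lt_one hab]; linarith
          have hpid : A + (1/(α+β)) • (E - A) = B + (β/(α+β)) • (D - B) := by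
            rw [hEdec]
            match_scalars <;> field_simp <;> ring
          obtain ⟨g, hgc, hge, hge3, hgA, hgD, hgB, hgiff⟩ :=
            exists_norm A D B (hlinne u y x huy hux (Ne.symm hxy))
          obtain ⟨h, hhc, hhe, hhe3, hhA, hhB, hhD, hhiff⟩ :=
            exists_norm A B D (hlinne u x y hux huy hxy)
          obtain ⟨n, hnc, hne, hne3, hnB, hnD, hnE, hniff⟩ :=
            exists_norm B D E (hlinne x y v hxy hxv hyv)
          obtain ⟨m, hmc, hme, hme3, hmD, hmE, hmA, hmiff⟩ :=
            exists_norm_neg D E A (hlinne y v u hyv (Ne.symm huy) (Ne.symm huv))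
          obtain ⟨r, hrc, hre, hre3, hrB, hrE, hrA, hriff⟩ :=
            exists_norm B E A (hlinne x v u hxv (Ne.symm hux) (Ne.symm huv))
          have hvals : ∀ (F : Plane → ℝ),
              (∀ X Y : Plane, ∀ t : ℝ, F (X + t • (Y - X)) = (1 - t) * F X + t * F Y) →
              (1 - 1/(α+β)) * F A + (1/(α+β)) * F E
                = (1 - β/(α+β)) * F B + (β/(α+β)) * F D := by
            intro F hF
            calc (1 - 1/(α+β)) * F A + (1/(α+β)) * F E
                = F (A + (1/(α+β)) • (E - A)) := (hF A E _).symm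
              _ = F (B + (β/(α+β)) • (D - B)) := by rw [hpid]
              _ = _ := hF B D _
          have hnA : n A < 0 := by
            have h1 := hvals n hne
            rw [hnB, hnD] at h1
            by_contra hcc
            push_neg at hcc
            linarith [mul_nonneg (by linarith : (0:ℝ) ≤ 1 - 1/(α+β)) hcc, mul_pos hs0 hnE]
          have hmB : m B < 0 := by
            have h1 := hvals m hme
            rw [hmD, hmE] at h1
            by_contra hcc
            push_neg at hcc
            linarith [mul_neg_of_pos_of_neg (by linarith : (0:ℝ) < 1 - 1/(α+β)) hmA,
              mul_nonneg (by linarith : (0:ℝ) ≤ 1 - β/(α+β)) hcc]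
          have hrD : 0 < r D := by
            have h1 := hvals r hre
            rw [hrB, hrE] at h1
            by_contra hcc
            push_neg at hcc
            linarith [mul_pos (by linarith : (0:ℝ) < 1 - 1/(α+β)) hrA,
              mul_nonpos_iff.mpr (Or.inl ⟨ht0.le, hcc⟩)]
          have hconeE : ∀ z ∈ C, 0 ≤ m z → r z ≤ 0 → False := by
            intro z hz hm hr
            obtain ⟨α2, β2, hzdec⟩ :=
              decomp (hlinne v x y (Ne.symm hxv) (Ne.symm hyv) hxy) z
            have hmz : m z = α2 * m B := by
              calc m z = m (E + α2 • (B - E) + β2 • (D - E)) := by rw [← hzdec]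
                _ = _ := by rw [hme3 E B D α2 β2, hmE, hmD]; ring
            have hrz : r z = β2 * r D := by
              calc r z = r (E + α2 • (B - E) + β2 • (D - E)) := by rw [← hzdec]
                _ = _ := by rw [hre3 E B D α2 β2, hrE, hrB]; ring
            have hα2 : α2 ≤ 0 := by
              by_contra hcc
              push_neg at hcc
              linarith [mul_neg_of_pos_of_neg hcc hmB]
            have hβ2 : β2 ≤ 0 := by
              by_contra hcc
              push_neg at hcc
              linarith [mul_pos hcc hrD]
            exact coneE_excl hKconv hBint hDint hEint (hCK hz) (hCne' z hz v) hα2 hβ2 hzdec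
          exact sepBeta A B D E C hCpre g h n m r hgc hhc hnc hmc hrc hgA hgD hhA hhB
            hnB hnD hmD hmE hrB hrE hgB hhD hnA hnE hmA hmB hrA hge hhe hne hme hre
            (fun z hz h0 => wABgen z hz ((hhiff z).mp h0))
            (fun z hz h0 => wDEgen z hz ((hmiff z).mp h0))
            (fun z hz h0 => wBDgen z hz ((hniff z).mp h0))
            (fun z hz h0 => wADgen z hz ((hgiff z).mp h0))
            (fun z hz h0 => wBEgen z hz ((hriff z).mp h0))
            hconeE c1 c3 hc1C hc3C t1 ⟨ht1.1, ht1.2⟩ hc1e t3 ⟨ht3.1, ht3.2⟩ hc3e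
        · -- v ∈ triangle ABD : contradiction with E on the hull boundary
          exfalso
          have hab : 0 < α + β := by linarith
          have habne : α + β ≠ 0 := ne_of_gt hab
          have hy1int : (α / (α + β)) • B + (β / (α + β)) • D ∈ interior K :=
            hKconv.interior hBint hDint (by positivity) (by positivity) (by field_simp)
          apply hEint
          have hid : ((α + β)) • ((α / (α + β)) • B + (β / (α + β)) • D)
              + (1 - α - β) • A = E := by
            rw [hEdec]
            match_scalars <;> field_simp <;> ring
          rw [← hid]
          exact hKconv.combo_interior_self_mem_interior hy1int (hmemK u)
            hab (by linarith) (by ring)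
end
end
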